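/- arXiv:1407.3775 — 3 statements merged into one kernel-verified Lean document; each statement's English description precedes it below -/
import Mathlib

section
/- The improper integral ∫₀^∞ (x − ⌊x⌋ − 1/2)/(1 + x) dx equals ∫₀^{1/2} ( Σ_{ν=1}^{∞} (−2x²)/((ν + 1/2)² − x²) ) dx, where the series converges uniformly on [0, 1/2]. -/
open Real Filter intervalIntegral MeasureTheory Topology

noncomputable def ff (x : ℝ) : ℝ := (x - (⌊x⌋ : ℝ) - 1 / 2) / (1 + x)
noncomputable def trm (n : ℕ) (x : ℝ) : ℝ := (-2 * x ^ 2) / (((n : ℝ) + 1 + 1 / 2) ^ 2 - x ^ 2)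
noncomputable def uu (n : ℕ) : ℝ := (1/2) / (((n:ℝ)+1)*((n:ℝ)+2))
noncomputable def cc (n : ℕ) : ℝ :=
  1 - ((n:ℝ)+3/2) * (Real.log ((n:ℝ)+2) - Real.log ((n:ℝ)+1))

lemma usum : Summable uu := by
  apply Summable.of_nonneg_of_le (fun n => by rw [uu]; positivity)
    (fun n => ?_) (summable_nat_add_iff 1 |>.mpr (Real.summable_one_div_nat_pow.mpr one_lt_two))
  have h1 : (0:ℝ) < (n:ℝ)+1 := by positivity
  rw [uu, div_le_div_iff₀ (by positivity) (by positivity)]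
  push_cast
  nlinarith [sq_nonneg ((n:ℝ)+1)]

lemma denom_pos {n : ℕ} {x : ℝ} (hx : x ∈ Set.Icc (0:ℝ) (1/2)) :
    ((n:ℝ)+1)*((n:ℝ)+2) ≤ ((n : ℝ) + 1 + 1 / 2) ^ 2 - x ^ 2 := by
  have h1 := hx.1; have h2 := hx.2
  nlinarith

lemma trm_bound (n : ℕ) (x : ℝ) (hx : x ∈ Set.Icc (0:ℝ) (1/2)) :
    ‖trm n x‖ ≤ uu n := by
  have hd := denom_pos (n := n) hx
  have hdp : (0:ℝ) < ((n:ℝ)+1)*((n:ℝ)+2) := by positivity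
  have h1 := hx.1; have h2 := hx.2
  rw [uu]; rw [trm, norm_div, Real.norm_eq_abs, Real.norm_eq_abs, abs_of_nonpos (by nlinarith),
    abs_of_pos (lt_of_lt_of_le hdp hd)]
  rw [div_le_div_iff₀ (lt_of_lt_of_le hdp hd) hdp]
  nlinarith

lemma unif : TendstoUniformlyOn
      (fun N : ℕ => fun x : ℝ =>
        ∑ ν ∈ Finset.range N, (-2 * x ^ 2) / (((ν : ℝ) + 1 + 1 / 2) ^ 2 - x ^ 2))
      (fun x : ℝ => ∑' ν : ℕ, (-2 * x ^ 2) / (((ν : ℝ) + 1 + 1 / 2) ^ 2 - x ^ 2))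
      atTop (Set.Icc (0 : ℝ) (1 / 2)) :=
  tendstoUniformlyOn_tsum_nat usum trm_bound

lemma ff_meas : Measurable ff := by
  apply Measurable.div
  · exact (measurable_id.sub (measurable_from_top.comp Int.measurable_floor)).sub measurable_const
  · exact measurable_const.add measurable_id

lemma ff_bound {x : ℝ} (hx : 0 ≤ x) : ‖ff x‖ ≤ (1/2) / (1 + x) := by
  have h1 : (⌊x⌋ : ℝ) ≤ x := Int.floor_le x
  have h2 : x < (⌊x⌋ : ℝ) + 1 := Int.lt_floor_add_one x
  rw [ff, norm_div, Real.norm_eq_abs, Real.norm_eq_abs, abs_of_pos (by linarith : (0:ℝ) < 1 + x)]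
  apply div_le_div_of_nonneg_right ?_ ?_  -- maybe wrong name
  · rw [abs_le]; constructor <;> linarith
  · linarith

lemma ff_intble {a b : ℝ} (ha : 0 ≤ a) (hb : 0 ≤ b) : IntervalIntegrable ff volume a b := by
  rw [intervalIntegrable_iff]
  apply Measure.integrableOn_of_bounded (M := 1/2)
  · exact (measure_Ioc_lt_top).ne
  · exact ff_meas.aestronglyMeasurable
  · apply (ae_restrict_iff' measurableSet_uIoc).mpr
    apply Eventually.of_forall
    intro x hx
    have hx0 : 0 ≤ x := le_of_lt (lt_of_le_of_lt (le_min ha hb) hx.1)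
    calc ‖ff x‖ ≤ (1/2)/(1+x) := ff_bound hx0
    _ ≤ 1/2 := by rw [div_le_iff₀ (by linarith)]; nlinarith

lemma A_eq (n : ℕ) : ∫ x in ((n:ℝ))..((n:ℝ)+1), ff x = cc n := by
  have key : ∫ x in ((n:ℝ))..((n:ℝ)+1), ff x
      = ∫ x in ((n:ℝ))..((n:ℝ)+1), (x - (n:ℝ) - 1/2)/(1+x) := by
    apply intervalIntegral.integral_congr_ae
    have h0 : (volume : Measure ℝ) {((n:ℝ)+1)} = 0 := measure_singleton _
    filter_upwards [measure_eq_zero_iff_ae_notMem.mp h0] with x hx hmem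
    have hx1 : x ≠ (n:ℝ)+1 := by simpa using hx
    rw [Set.uIoc_of_le (by linarith : (n:ℝ) ≤ (n:ℝ)+1)] at hmem
    have hfl : (⌊x⌋ : ℝ) = (n : ℝ) := by
      have : ⌊x⌋ = (n : ℤ) := by
        rw [Int.floor_eq_iff]
        constructor
        · push_cast; linarith [hmem.1]
        · push_cast; rcases lt_or_eq_of_le hmem.2 with h | h
          · exact h
          · exact absurd h hx1
      rw [this]; push_cast; ring
    rw [ff, hfl]
  rw [key]
  have hne : ∀ x ∈ Set.uIcc ((n:ℝ)) ((n:ℝ)+1), (0:ℝ) < 1 + x := by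
    intro x hx
    rw [Set.uIcc_of_le (by linarith : (n:ℝ) ≤ (n:ℝ)+1)] at hx
    have : (0:ℝ) ≤ (n:ℝ) := Nat.cast_nonneg n
    have := hx.1; linarith
  rw [intervalIntegral.integral_eq_sub_of_hasDerivAt
    (f := fun x => x - ((n:ℝ)+3/2) * Real.log (1+x))
    (f' := fun x => (x - (n:ℝ) - 1/2)/(1+x)) ?_ ?_]
  · have e1 : (1:ℝ) + ((n:ℝ)+1) = (n:ℝ)+2 := by ring
    have e2 : (1:ℝ) + (n:ℝ) = (n:ℝ)+1 := by ring
    rw [e1, e2, cc]; ring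
  · intro x hx
    have hpos := hne x hx
    have h1 : HasDerivAt (fun x : ℝ => Real.log (1+x)) (1/(1+x)) x := by
      have := (Real.hasDerivAt_log hpos.ne').comp x ((hasDerivAt_id x).const_add 1)
      simpa [one_div, Function.comp_def] using this
    have h2 := (hasDerivAt_id x).sub ((h1.const_mul ((n:ℝ)+3/2)))
    convert h2 using 1
    · rfl
    field_simp
    ring
  · apply ContinuousOn.intervalIntegrable
    apply ContinuousOn.div
    · fun_prop
    · fun_prop
    · intro x hx; exact (hne x hx).ne'

lemma trm_contOn (n : ℕ) : ContinuousOn (trm n) (Set.uIcc (0:ℝ) (1/2)) := by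
  rw [Set.uIcc_of_le (by norm_num : (0:ℝ) ≤ 1/2)]
  apply ContinuousOn.div
  · fun_prop
  · fun_prop
  · intro x hx
    have := denom_pos (n := n) hx
    have hp : (0:ℝ) < ((n:ℝ)+1)*((n:ℝ)+2) := by positivity
    linarith

lemma B_eq (n : ℕ) : ∫ x in (0:ℝ)..(1/2), trm n x = cc n := by
  set a : ℝ := (n:ℝ) + 3/2 with ha
  have hrange : ∀ x ∈ Set.uIcc (0:ℝ) (1/2), 0 < a + x ∧ 0 < a - x := by
    intro x hx
    rw [Set.uIcc_of_le (by norm_num : (0:ℝ) ≤ 1/2)] at hx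
    have h1 := hx.1; have h2 := hx.2
    have : (0:ℝ) ≤ (n:ℝ) := Nat.cast_nonneg n
    rw [ha] at *; constructor <;> [linarith; linarith]
  rw [intervalIntegral.integral_eq_sub_of_hasDerivAt
    (f := fun x => 2*x - a * Real.log (a+x) + a * Real.log (a-x))
    (f' := trm n) ?_ ((trm_contOn n).intervalIntegrable)]
  · have e1 : a + 1/2 = (n:ℝ)+2 := by rw [ha]; ring
    have e2 : a - 1/2 = (n:ℝ)+1 := by rw [ha]; ring
    have e3 : a + 0 = a := by ring
    have e4 : a - 0 = a := by ring
    rw [e1, e2, e3, e4, cc]; ring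
  · intro x hx
    obtain ⟨hp1, hp2⟩ := hrange x hx
    have h1 : HasDerivAt (fun x : ℝ => Real.log (a+x)) (1/(a+x)) x := by
      have := (Real.hasDerivAt_log hp1.ne').comp x ((hasDerivAt_id x).const_add a)
      simpa [one_div, Function.comp_def] using this
    have h2 : HasDerivAt (fun x : ℝ => Real.log (a-x)) (-(1/(a-x))) x := by
      have := (Real.hasDerivAt_log hp2.ne').comp x (((hasDerivAt_id x).const_sub a))
      simpa [one_div, Function.comp_def] using this
    have h3 := (((hasDerivAt_id x).const_mul 2).sub (h1.const_mul a)).add (h2.const_mul a)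
    convert h3 using 1
    · rfl
    rw [trm]
    have hd : ((n : ℝ) + 1 + 1 / 2) ^ 2 - x ^ 2 = (a+x)*(a-x) := by rw [ha]; ring
    rw [hd]
    field_simp
    ring

lemma trm_meas (n : ℕ) : Measurable (trm n) := by
  apply Measurable.div <;> fun_prop

lemma hasSum_cc : HasSum cc (∫ x in (0:ℝ)..(1/2), ∑' ν : ℕ, trm ν x) := by
  have key : HasSum (fun n => ∫ x in (0:ℝ)..(1/2), trm n x)
      (∫ x in (0:ℝ)..(1/2), ∑' ν : ℕ, trm ν x) := by
    apply intervalIntegral.hasSum_integral_of_dominated_convergence (bound := fun n _ => uu n)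
    · exact fun n => (trm_meas n).aestronglyMeasurable
    · intro n
      apply Eventually.of_forall
      intro t ht
      rw [Set.uIoc_of_le (by norm_num : (0:ℝ) ≤ 1/2)] at ht
      exact trm_bound n t ⟨le_of_lt ht.1, ht.2⟩
    · exact Eventually.of_forall fun t _ => usum
    · exact intervalIntegrable_const
    · apply Eventually.of_forall
      intro t ht
      rw [Set.uIoc_of_le (by norm_num : (0:ℝ) ≤ 1/2)] at ht
      exact ((Summable.of_norm_bounded usum (fun n => trm_bound n t ⟨le_of_lt ht.1, ht.2⟩)).hasSum)
  simpa only [B_eq] using key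

lemma intN (N : ℕ) : ∫ x in (0:ℝ)..((N:ℝ)), ff x = ∑ n ∈ Finset.range N, cc n := by
  induction N with
  | zero => simp
  | succ N ih =>
    have hadd := intervalIntegral.integral_add_adjacent_intervals
      (ff_intble le_rfl (Nat.cast_nonneg N))
      (ff_intble (Nat.cast_nonneg N) (by positivity : (0:ℝ) ≤ (N:ℝ)+1))
    push_cast
    rw [← hadd, ih, A_eq, Finset.sum_range_succ]

lemma tendsto_main :
    Tendsto (fun T : ℝ => ∫ x in (0 : ℝ)..T, ff x) atTop
      (nhds (∫ x in (0 : ℝ)..(1/2), ∑' ν : ℕ, trm ν x)) := by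
  set I := ∫ x in (0 : ℝ)..(1/2), ∑' ν : ℕ, trm ν x with hI
  have tnat : Tendsto (fun N : ℕ => ∫ x in (0:ℝ)..((N:ℝ)), ff x) atTop (𝓝 I) := by
    simp only [intN]
    exact hasSum_cc.tendsto_sum_nat
  have t1 : Tendsto (fun T : ℝ => ∫ x in (0:ℝ)..((⌊T⌋₊ : ℝ)), ff x) atTop (𝓝 I) :=
    tnat.comp tendsto_nat_floor_atTop
  have t2 : Tendsto (fun T : ℝ => ∫ x in ((⌊T⌋₊ : ℝ))..T, ff x) atTop (𝓝 0) := by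
    apply squeeze_zero_norm' (a := fun T => (1/2)/(1+(⌊T⌋₊:ℝ)))
    · filter_upwards [eventually_ge_atTop (0:ℝ)] with T hT
      have hfl : (⌊T⌋₊ : ℝ) ≤ T := Nat.floor_le hT
      have hlt : T < (⌊T⌋₊ : ℝ) + 1 := Nat.lt_floor_add_one T
      have hb : ∀ x ∈ Set.uIoc ((⌊T⌋₊:ℝ)) T, ‖ff x‖ ≤ (1/2)/(1+(⌊T⌋₊:ℝ)) := by
        intro x hx
        rw [Set.uIoc_of_le hfl] at hx
        have hx0 : (0:ℝ) ≤ x := le_trans (Nat.cast_nonneg _) (le_of_lt hx.1)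
        refine le_trans (ff_bound hx0) ?_
        apply div_le_div_of_nonneg_left (by norm_num) (by positivity) (by linarith [hx.1])
      calc ‖∫ x in ((⌊T⌋₊ : ℝ))..T, ff x‖ ≤ (1/2)/(1+(⌊T⌋₊:ℝ)) * |T - (⌊T⌋₊:ℝ)| :=
            intervalIntegral.norm_integral_le_of_norm_le_const hb
        _ ≤ (1/2)/(1+(⌊T⌋₊:ℝ)) := by
            rw [abs_of_nonneg (by linarith)]
            have hC : (0:ℝ) ≤ 1/2/(1+(⌊T⌋₊:ℝ)) := by positivity
            calc (1/2)/(1+(⌊T⌋₊:ℝ)) * (T - (⌊T⌋₊:ℝ)) ≤ (1/2)/(1+(⌊T⌋₊:ℝ)) * 1 :=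
                  mul_le_mul_of_nonneg_left (by linarith) hC
              _ = (1/2)/(1+(⌊T⌋₊:ℝ)) := mul_one _
    · apply Tendsto.div_atTop (tendsto_const_nhds)
      exact tendsto_atTop_add_const_left _ 1 (tendsto_natCast_atTop_atTop.comp tendsto_nat_floor_atTop)
  have := t1.add t2
  rw [add_zero] at this
  apply this.congr'
  filter_upwards [eventually_ge_atTop (0:ℝ)] with T hT
  exact intervalIntegral.integral_add_adjacent_intervals
    (ff_intble le_rfl (Nat.cast_nonneg _)) (ff_intble (Nat.cast_nonneg _) hT)

/-- The improper integral `∫₀^∞ (x − ⌊x⌋ − 1/2)/(1 + x) dx` equals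
`∫₀^{1/2} Σ_{ν=1}^∞ (−2x²)/((ν + 1/2)² − x²) dx`, the series converging
uniformly on `[0, 1/2]`.  (The series over `ν ≥ 1` is indexed below by
`ν : ℕ` via `ν ↦ ν + 1`.) -/
theorem improper_integral_eq_series_integral :
    TendstoUniformlyOn
      (fun N : ℕ => fun x : ℝ =>
        ∑ ν ∈ Finset.range N, (-2 * x ^ 2) / (((ν : ℝ) + 1 + 1 / 2) ^ 2 - x ^ 2))
      (fun x : ℝ => ∑' ν : ℕ, (-2 * x ^ 2) / (((ν : ℝ) + 1 + 1 / 2) ^ 2 - x ^ 2))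
      atTop (Set.Icc (0 : ℝ) (1 / 2)) ∧
    Tendsto (fun T : ℝ => ∫ x in (0 : ℝ)..T, (x - (⌊x⌋ : ℝ) - 1 / 2) / (1 + x))
      atTop
      (nhds (∫ x in (0 : ℝ)..(1 / 2),
        ∑' ν : ℕ, (-2 * x ^ 2) / (((ν : ℝ) + 1 + 1 / 2) ^ 2 - x ^ 2))) := by
  exact ⟨unif, tendsto_main⟩
end

section
/- For every real x with 0 ≤ x < 1/2, the partial fraction expansion π·tan(πx) = Σ_{ν=0}^{∞} 2x/((ν + 1/2)² − x²) holds, the series being convergent. -/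
open Real Filter Finset Topology intervalIntegral


lemma pt_summable_aux {c : ℝ} (hc0 : 0 ≤ c) (hc1 : c < 1/2) :
    Summable (fun ν : ℕ => 2 * c / (((ν : ℝ) + 1 / 2) ^ 2 - c ^ 2)) := by
  have hsum : Summable (fun ν : ℕ => (8*c/(1-4*c^2)) * (1/((ν:ℝ)+1)^2)) := by
    apply Summable.mul_left
    have h : Summable (fun n : ℕ => 1/(n:ℝ)^2) :=
      Real.summable_one_div_nat_pow.mpr one_lt_two
    have h2 := (summable_nat_add_iff (f := fun n : ℕ => 1/(n:ℝ)^2) 1).mpr h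
    simpa [Nat.cast_add] using h2
  have hpos : ∀ ν : ℕ, 0 ≤ 2 * c / (((ν : ℝ) + 1 / 2) ^ 2 - c ^ 2) := by
    intro ν
    have hν : (0:ℝ) ≤ (ν:ℝ) := Nat.cast_nonneg ν
    have h1 : c ^ 2 < ((ν:ℝ)+1/2)^2 := by nlinarith
    exact div_nonneg (by linarith) (by linarith)
  have hle : ∀ ν : ℕ, 2 * c / (((ν : ℝ) + 1 / 2) ^ 2 - c ^ 2)
      ≤ (8*c/(1-4*c^2)) * (1/((ν:ℝ)+1)^2) := by
    intro ν
    have hν : (0:ℝ) ≤ (ν:ℝ) := Nat.cast_nonneg ν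
    have hd : (1-4*c^2) * (((ν:ℝ)+1)^2/4) ≤ ((ν:ℝ)+1/2)^2 - c^2 := by
      nlinarith [mul_nonneg (mul_nonneg (sq_nonneg c) hν) hν, mul_nonneg (sq_nonneg c) hν]
    have hd0 : (0:ℝ) < (1-4*c^2) * (((ν:ℝ)+1)^2/4) := by
      have : (0:ℝ) < 1-4*c^2 := by nlinarith
      positivity
    calc 2*c/(((ν:ℝ)+1/2)^2 - c^2) ≤ 2*c/((1-4*c^2) * (((ν:ℝ)+1)^2/4)) := by
            apply div_le_div_of_nonneg_left (by positivity) hd0 hd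
      _ = (8*c/(1-4*c^2)) * (1/((ν:ℝ)+1)^2) := by
            have h4 : ((ν:ℝ)+1)^2 ≠ 0 := by positivity
            have h5 : (1-4*c^2) ≠ 0 := by nlinarith
            field_simp
            ring
  exact Summable.of_nonneg_of_le hpos hle hsum

lemma pt_prod_range_two_mul (f : ℕ → ℝ) (N : ℕ) :
    ∏ j ∈ range (2*N), f j = (∏ k ∈ range N, f (2*k)) * ∏ k ∈ range N, f (2*k+1) := by
  induction N with
  | zero => simp
  | succ n ih =>
    have h2 : 2*(n+1) = (2*n+1)+1 := by ring
    rw [h2, prod_range_succ, prod_range_succ, prod_range_succ, prod_range_succ, ih]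
    ring

lemma pt_cos_prod {t : ℝ} (ht0 : 0 < t) (ht1 : t < 1/2) :
    Tendsto (fun N : ℕ => ∏ k ∈ range N, ((1:ℝ) - t^2/((k:ℝ)+1/2)^2)) atTop
      (𝓝 (Real.cos (π*t))) := by
  have hA := Real.tendsto_euler_sin_prod t
  have htwo : Tendsto (fun N : ℕ => 2*N) atTop atTop :=
    tendsto_atTop_mono (fun n => by simp; omega) tendsto_id
  have hB := (Real.tendsto_euler_sin_prod (2*t)).comp htwo
  have hsin : Real.sin (π*t) ≠ 0 := by
    apply ne_of_gt
    apply Real.sin_pos_of_pos_of_lt_pi (by positivity)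
    nlinarith [Real.pi_pos, Real.pi_gt_three]
  have hdiv := hB.div hA hsin
  have hkey : ∀ N : ℕ, (π * (2*t) * ∏ j ∈ range (2*N), ((1:ℝ) - (2*t)^2/((j:ℝ)+1)^2)) /
      (π * t * ∏ j ∈ range N, ((1:ℝ) - t^2/((j:ℝ)+1)^2))
      = 2 * ∏ k ∈ range N, ((1:ℝ) - t^2/((k:ℝ)+1/2)^2) := by
    intro N
    rw [pt_prod_range_two_mul]
    have he : ∀ k : ℕ, (1:ℝ) - (2*t)^2/(((2*k+1:ℕ):ℝ)+1)^2 = 1 - t^2/((k:ℝ)+1)^2 := by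
      intro k
      push_cast
      have h4 : ((2:ℝ)*k+1+1)^2 = 4*((k:ℝ)+1)^2 := by ring
      rw [h4]
      congr 1
      rw [div_eq_div_iff (by positivity) (by positivity)]
      ring
    have ho : ∀ k : ℕ, (1:ℝ) - (2*t)^2/(((2*k:ℕ):ℝ)+1)^2 = 1 - t^2/((k:ℝ)+1/2)^2 := by
      intro k
      push_cast
      have h4 : ((2:ℝ)*k+1)^2 = 4*((k:ℝ)+1/2)^2 := by ring
      rw [h4]
      congr 1
      rw [div_eq_div_iff (by positivity) (by positivity)]
      ring
    rw [Finset.prod_congr rfl (fun k _ => ho k), Finset.prod_congr rfl (fun k _ => he k)]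
    have hP : (∏ j ∈ range N, ((1:ℝ) - t^2/((j:ℝ)+1)^2)) ≠ 0 := by
      apply Finset.prod_ne_zero_iff.mpr
      intro j _
      have hj : (1:ℝ) ≤ ((j:ℝ)+1)^2 := by nlinarith [Nat.cast_nonneg (α := ℝ) j]
      have : t^2/((j:ℝ)+1)^2 < 1 := by
        rw [div_lt_one (by positivity)]
        nlinarith
      linarith
    generalize (∏ j ∈ range N, ((1:ℝ) - t^2/((j:ℝ)+1)^2)) = P at hP ⊢
    generalize (∏ k ∈ range N, ((1:ℝ) - t^2/((k:ℝ)+1/2)^2)) = Q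
    have hpi : π ≠ 0 := Real.pi_ne_zero
    have ht : t ≠ 0 := ne_of_gt ht0
    field_simp
  have hdiv2 : Tendsto (fun N : ℕ => 2 * ∏ k ∈ range N, ((1:ℝ) - t^2/((k:ℝ)+1/2)^2))
      atTop (𝓝 (Real.sin (π*(2*t)) / Real.sin (π*t))) :=
    hdiv.congr (fun N => by simpa [Pi.div_apply, Function.comp] using hkey N)
  have hval : Real.sin (π*(2*t)) / Real.sin (π*t) = 2 * Real.cos (π*t) := by
    have h2 : π*(2*t) = 2*(π*t) := by ring
    rw [h2, Real.sin_two_mul]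
    field_simp
  rw [hval] at hdiv2
  have := hdiv2.div_const 2
  simpa [mul_div_assoc, mul_comm, mul_div_cancel_left₀] using this

noncomputable def ptS (t : ℝ) : ℝ := ∑' ν : ℕ, 2 * t / (((ν : ℝ) + 1 / 2) ^ 2 - t ^ 2)

lemma denom_pos_s5 {t : ℝ} (ht : |t| < 1/2) (ν : ℕ) : 0 < ((ν : ℝ) + 1 / 2) ^ 2 - t ^ 2 := by
  have hν : (0:ℝ) ≤ (ν:ℝ) := Nat.cast_nonneg ν
  have h1 : t^2 < (1/2:ℝ)^2 := by
    have := abs_nonneg t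
    nlinarith [sq_abs t]
  nlinarith

-- log sum limit
lemma log_sum_tendsto {y : ℝ} (hy0 : 0 < y) (hy1 : y < 1/2) :
    Tendsto (fun N : ℕ => ∑ ν ∈ range N,
      (Real.log (((ν:ℝ)+1/2)^2) - Real.log (((ν:ℝ)+1/2)^2 - y^2))) atTop
      (𝓝 (-Real.log (Real.cos (π*y)))) := by
  have hcos : 0 < Real.cos (π*y) := by
    apply Real.cos_pos_of_mem_Ioo
    constructor
    · nlinarith [Real.pi_pos]
    · nlinarith [Real.pi_pos]
  have hlog := (pt_cos_prod hy0 hy1).log (ne_of_gt hcos)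
  have habs : |y| < 1/2 := by rw [abs_of_pos hy0]; exact hy1
  have hfac : ∀ ν : ℕ, (1:ℝ) - y^2/((ν:ℝ)+1/2)^2 ≠ 0 := by
    intro ν
    have hd := denom_pos_s5 habs ν
    have hν : (0:ℝ) ≤ (ν:ℝ) := Nat.cast_nonneg ν
    have hp : (0:ℝ) < ((ν:ℝ)+1/2)^2 := by positivity
    have : y^2/((ν:ℝ)+1/2)^2 < 1 := by rw [div_lt_one hp]; linarith
    linarith
  have hrw : ∀ N : ℕ, Real.log (∏ k ∈ range N, ((1:ℝ) - y^2/((k:ℝ)+1/2)^2))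
      = -∑ ν ∈ range N, (Real.log (((ν:ℝ)+1/2)^2) - Real.log (((ν:ℝ)+1/2)^2 - y^2)) := by
    intro N
    rw [Real.log_prod (fun ν _ => hfac ν), ← Finset.sum_neg_distrib]
    apply Finset.sum_congr rfl
    intro ν _
    have hd := denom_pos_s5 habs ν
    have hν : (0:ℝ) ≤ (ν:ℝ) := Nat.cast_nonneg ν
    have hp : (0:ℝ) < ((ν:ℝ)+1/2)^2 := by positivity
    have h1 : (1:ℝ) - y^2/((ν:ℝ)+1/2)^2 = (((ν:ℝ)+1/2)^2 - y^2)/((ν:ℝ)+1/2)^2 := by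
      field_simp
    rw [h1, Real.log_div (by linarith) (by positivity)]
    ring_nf
  have := hlog.congr hrw
  have h2 := this.neg
  simpa using h2

-- integral identity
lemma pt_integral_S {y : ℝ} (hy0 : 0 < y) (hy1 : y < 1/2) :
    ∫ t in (0:ℝ)..y, ptS t = -Real.log (Real.cos (π*y)) := by
  set F : ℕ → ℝ → ℝ := fun N t => ∑ ν ∈ range N, 2 * t / (((ν : ℝ) + 1 / 2) ^ 2 - t ^ 2)
  have habsy : |y| < 1/2 := by rw [abs_of_pos hy0]; exact hy1
  have hcont : ∀ ν : ℕ, ContinuousOn (fun t : ℝ => 2 * t / (((ν : ℝ) + 1 / 2) ^ 2 - t ^ 2))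
      (Set.uIcc (0:ℝ) y) := by
    intro ν
    apply ContinuousOn.div (by fun_prop) (by fun_prop)
    intro t ht
    rw [Set.uIcc_of_le (le_of_lt hy0)] at ht
    have habs : |t| < 1/2 := by
      rw [abs_lt]; constructor <;> [linarith [ht.1]; linarith [ht.2]]
    exact ne_of_gt (denom_pos_s5 habs ν)
  -- each term's integral
  have hterm : ∀ ν : ℕ, ∫ t in (0:ℝ)..y, 2 * t / (((ν : ℝ) + 1 / 2) ^ 2 - t ^ 2)
      = Real.log (((ν:ℝ)+1/2)^2) - Real.log (((ν:ℝ)+1/2)^2 - y^2) := by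
    intro ν
    have hderiv : ∀ t ∈ Set.uIcc (0:ℝ) y,
        HasDerivAt (fun s : ℝ => -Real.log (((ν:ℝ)+1/2)^2 - s^2))
          (2 * t / (((ν : ℝ) + 1 / 2) ^ 2 - t ^ 2)) t := by
      intro t ht
      rw [Set.uIcc_of_le (le_of_lt hy0)] at ht
      have habs : |t| < 1/2 := by
        rw [abs_lt]; constructor <;> [linarith [ht.1]; linarith [ht.2]]
      have hd := denom_pos_s5 habs ν
      have h1 : HasDerivAt (fun s : ℝ => ((ν:ℝ)+1/2)^2 - s^2) (-(2*t)) t := by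
        have := ((hasDerivAt_pow 2 t).const_sub (((ν:ℝ)+1/2)^2))
        simpa using this
      have h2 := (h1.log (ne_of_gt hd)).neg
      have h3 : (2 * t / (((ν : ℝ) + 1 / 2) ^ 2 - t ^ 2))
          = -(-(2*t) / (((ν:ℝ)+1/2)^2 - t^2)) := by ring
      rw [h3]; exact h2
    have hInt : IntervalIntegrable (fun t : ℝ => 2 * t / (((ν : ℝ) + 1 / 2) ^ 2 - t ^ 2))
        MeasureTheory.volume 0 y := (hcont ν).intervalIntegrable
    rw [integral_eq_sub_of_hasDerivAt hderiv hInt]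
    norm_num
    ring
  -- dominated convergence
  have hsum_y := pt_summable_aux (le_of_lt hy0) hy1
  set C : ℝ := ∑' ν : ℕ, 2 * y / (((ν : ℝ) + 1 / 2) ^ 2 - y ^ 2) with hC
  have hbound : ∀ N : ℕ, ∀ t ∈ Set.uIoc (0:ℝ) y, ‖F N t‖ ≤ C := by
    intro N t ht
    rw [Set.uIoc_of_le (le_of_lt hy0)] at ht
    have ht0 : 0 < t := ht.1
    have hty : t ≤ y := ht.2
    have habs : |t| < 1/2 := by rw [abs_of_pos ht0]; linarith
    have hnn : 0 ≤ F N t := by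
      apply Finset.sum_nonneg
      intro ν _
      exact div_nonneg (by linarith) (le_of_lt (denom_pos_s5 habs ν))
    rw [Real.norm_eq_abs, abs_of_nonneg hnn]
    calc F N t ≤ ∑ ν ∈ range N, 2 * y / (((ν : ℝ) + 1 / 2) ^ 2 - y ^ 2) := by
          apply Finset.sum_le_sum
          intro ν _
          exact div_le_div₀ (by linarith) (by linarith) (denom_pos_s5 habsy ν) (by nlinarith)
      _ ≤ C := Summable.sum_le_tsum _ (fun ν _ => div_nonneg (by linarith)
            (le_of_lt (denom_pos_s5 habsy ν))) hsum_y
  have hFmeas : ∀ N : ℕ, MeasureTheory.AEStronglyMeasurable (F N)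
      (MeasureTheory.volume.restrict (Set.uIoc (0:ℝ) y)) := by
    intro N
    have : ContinuousOn (F N) (Set.uIoc (0:ℝ) y) := by
      apply continuousOn_finset_sum
      intro ν _
      exact (hcont ν).mono Set.uIoc_subset_uIcc
    exact this.aestronglyMeasurable measurableSet_uIoc
  have h_lim : ∀ t ∈ Set.uIoc (0:ℝ) y, Tendsto (fun N => F N t) atTop (𝓝 (ptS t)) := by
    intro t ht
    rw [Set.uIoc_of_le (le_of_lt hy0)] at ht
    have hs := pt_summable_aux (le_of_lt ht.1) (lt_of_le_of_lt ht.2 hy1)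
    exact hs.hasSum.tendsto_sum_nat
  have htend : Tendsto (fun N => ∫ t in (0:ℝ)..y, F N t) atTop (𝓝 (∫ t in (0:ℝ)..y, ptS t)) := by
    apply tendsto_integral_filter_of_dominated_convergence (fun _ => C)
    · exact Eventually.of_forall hFmeas
    · exact Eventually.of_forall (fun N =>
        MeasureTheory.ae_of_all _ (fun t ht => hbound N t ht))
    · exact intervalIntegrable_const
    · exact MeasureTheory.ae_of_all _ h_lim
  have heq : ∀ N : ℕ, ∫ t in (0:ℝ)..y, F N t = ∑ ν ∈ range N,
      (Real.log (((ν:ℝ)+1/2)^2) - Real.log (((ν:ℝ)+1/2)^2 - y^2)) := by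
    intro N
    rw [intervalIntegral.integral_finset_sum (fun ν _ => (hcont ν).intervalIntegrable)]
    exact Finset.sum_congr rfl (fun ν _ => hterm ν)
  rw [funext heq] at htend
  exact tendsto_nhds_unique htend (log_sum_tendsto hy0 hy1)

lemma pt_S_contOn {c : ℝ} (hc0 : 0 < c) (hc1 : c < 1/2) :
    ContinuousOn ptS (Set.Icc (-c) c) := by
  apply continuousOn_tsum (u := fun ν : ℕ => 2 * c / (((ν : ℝ) + 1 / 2) ^ 2 - c ^ 2))
  · intro ν
    apply ContinuousOn.div (by fun_prop) (by fun_prop)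
    intro t ht
    have habs : |t| < 1/2 := by
      rw [abs_lt]; exact ⟨by linarith [ht.1], by linarith [ht.2]⟩
    exact ne_of_gt (denom_pos_s5 habs ν)
  · exact pt_summable_aux (le_of_lt hc0) hc1
  · intro ν t ht
    have habs : |t| ≤ c := abs_le.mpr ⟨ht.1, ht.2⟩
    have habs2 : |t| < 1/2 := lt_of_le_of_lt habs hc1
    have habsc : |c| < 1/2 := by rw [abs_of_pos hc0]; exact hc1
    have hd := denom_pos_s5 habs2 ν
    have hdc := denom_pos_s5 habsc ν
    rw [Real.norm_eq_abs, abs_div, abs_of_pos hd, abs_mul]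
    have h2 : |(2:ℝ)| = 2 := by norm_num
    rw [h2]
    exact div_le_div₀ (by linarith) (by linarith) hdc (by nlinarith [sq_abs t, abs_nonneg t])

/-- Partial fraction expansion of the tangent function: for `0 ≤ x < 1/2`,
`π tan(πx) = Σ_{ν=0}^∞ 2x/((ν + 1/2)² − x²)`, the series being convergent. -/
theorem pi_tan_eq_tsum (x : ℝ) (hx0 : 0 ≤ x) (hx1 : x < 1 / 2) :
    Summable (fun ν : ℕ => 2 * x / (((ν : ℝ) + 1 / 2) ^ 2 - x ^ 2)) ∧
    π * Real.tan (π * x) = ∑' ν : ℕ, 2 * x / (((ν : ℝ) + 1 / 2) ^ 2 - x ^ 2) := by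
  rcases eq_or_lt_of_le hx0 with hx | hx
  · refine ⟨?_, ?_⟩ <;> simp [← hx]
  refine ⟨pt_summable_aux hx0 hx1, ?_⟩
  set c : ℝ := (2*x+1)/4 with hc
  have hc0 : 0 < c := by rw [hc]; linarith
  have hxc : x < c := by rw [hc]; linarith
  have hc1 : c < 1/2 := by rw [hc]; linarith
  have hScont := pt_S_contOn hc0 hc1
  have hSat : ContinuousAt ptS x :=
    hScont.continuousAt (Icc_mem_nhds (by linarith) hxc)
  have hIccsub : Set.uIcc (0:ℝ) x ⊆ Set.Icc (-c) c := by
    rw [Set.uIcc_of_le hx0]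
    exact Set.Icc_subset_Icc (by linarith) (le_of_lt hxc)
  have hIntS : IntervalIntegrable ptS MeasureTheory.volume 0 x :=
    (hScont.mono hIccsub).intervalIntegrable
  have hmeasAt : StronglyMeasurableAtFilter ptS (𝓝 x) MeasureTheory.volume := by
    refine ContinuousOn.stronglyMeasurableAtFilter isOpen_Ioo
      (hScont.mono Set.Ioo_subset_Icc_self) x ⟨by linarith, hxc⟩
  have hF1 : HasDerivAt (fun y => ∫ t in (0:ℝ)..y, ptS t) (ptS x) x :=
    intervalIntegral.integral_hasDerivAt_right hIntS hmeasAt hSat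
  have hEq : (fun y => ∫ t in (0:ℝ)..y, ptS t) =ᶠ[𝓝 x] (fun y => -Real.log (Real.cos (π*y))) := by
    filter_upwards [Ioo_mem_nhds hx hxc] with y hy
    exact pt_integral_S hy.1 (lt_trans hy.2 hc1)
  have hcosne : Real.cos (π*x) ≠ 0 := by
    apply ne_of_gt
    apply Real.cos_pos_of_mem_Ioo
    constructor
    · nlinarith [Real.pi_pos]
    · nlinarith [Real.pi_pos]
  have hG : HasDerivAt (fun y : ℝ => -Real.log (Real.cos (π*y))) (π * Real.tan (π*x)) x := by
    have h1 : HasDerivAt (fun y : ℝ => π*y) π x := by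
      simpa using (hasDerivAt_id x).const_mul π
    have hcos : HasDerivAt (fun y : ℝ => Real.cos (π*y)) (-Real.sin (π*x) * π) x :=
      (Real.hasDerivAt_cos (π*x)).comp x h1
    have hlog := (hcos.log hcosne).neg
    have h3 : π * Real.tan (π*x) = -(-Real.sin (π*x) * π / Real.cos (π*x)) := by
      rw [Real.tan_eq_sin_div_cos]; ring
    rw [h3]; exact hlog
  have hF1G : HasDerivAt (fun y : ℝ => -Real.log (Real.cos (π*y))) (ptS x) x :=
    hEq.hasDerivAt_iff.mp hF1
  have := hF1G.unique hG
  rw [← this]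
  rfl
end

section
/- The improper integral ∫₀^{1/2} ( 1/(1 − 2x) − πx·tan(πx) ) dx equals log √π − log √2 − ∫₀^{1/2} log cos(πx) dx. -/
open Real intervalIntegral
open MeasureTheory Set Filter Topology

set_option maxHeartbeats 1000000 in

lemma phi_abs_le (x : ℝ) (hx : x ∈ Set.Icc (0:ℝ) (1/2)) :
    |1 / (1 - 2 * x) - π * x * Real.tan (π * x)| ≤ 2 := by
  obtain ⟨hx0, hx2⟩ := hx
  rcases eq_or_lt_of_le hx2 with h | h
  · subst h
    have h1 : π * (1/2 : ℝ) = π/2 := by ring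
    rw [h1, Real.tan_pi_div_two]
    norm_num
  rcases eq_or_lt_of_le hx0 with h0 | h0
  · rw [← h0]; norm_num
  obtain ⟨u, hu, hu0⟩ : ∃ u : ℝ, u = 1/2 - x ∧ 0 < u := ⟨_, rfl, by linarith⟩
  have hπu : 0 < π * u := by positivity
  have hπu2 : π * u < π/2 := by nlinarith [pi_pos]
  have htan_gt : π * u < Real.tan (π * u) := Real.lt_tan hπu hπu2
  have htanpos : 0 < Real.tan (π * u) := lt_trans hπu htan_gt
  have hx' : Real.tan (π * x) = (Real.tan (π * u))⁻¹ := by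
    have h2 : π * x = π/2 - π * u := by rw [hu]; ring
    rw [h2, Real.tan_pi_div_two_sub]
  have h2u : 1 - 2 * x = 2 * u := by rw [hu]; ring
  have hsin : Real.sin (π * u) ≤ π * u := Real.sin_le hπu.le
  have hsinpos : 0 < Real.sin (π * u) :=
    Real.sin_pos_of_pos_of_lt_pi hπu (by nlinarith [Real.pi_gt_three])
  have hcos : 1 - (π*u)^2/2 ≤ Real.cos (π * u) := Real.one_sub_sq_div_two_le_cos
  have hcosnn : 0 ≤ Real.cos (π * u) :=
    Real.cos_nonneg_of_mem_Icc ⟨by linarith [pi_pos, hπu], hπu2.le⟩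
  have hTinv : (Real.tan (π*u))⁻¹ = Real.cos (π*u) / Real.sin (π*u) := by
    rw [Real.tan_eq_sin_div_cos, inv_div]
  rw [hx', h2u]
  obtain ⟨T, hT⟩ : ∃ T : ℝ, T = (Real.tan (π*u))⁻¹ := ⟨_, rfl⟩
  rw [← hT]
  have hinv : T ≤ (π * u)⁻¹ := by
    rw [hT]; exact inv_anti₀ hπu htan_gt.le
  have hTnn : 0 ≤ T := by rw [hT]; positivity
  have h5 : 1 / (2*u) - x / u = 1 := by
    rw [div_sub_div _ _ (by positivity : (2:ℝ)*u ≠ 0) (ne_of_gt hu0),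
      div_eq_one_iff_eq (by positivity)]
    rw [hu]; ring
  have hlow : (1:ℝ) ≤ 1 / (2*u) - π * x * T := by
    have h3 : π * x * T ≤ π * x * (π * u)⁻¹ :=
      mul_le_mul_of_nonneg_left hinv (by positivity)
    have h4 : π * x * (π * u)⁻¹ = x / u := by
      field_simp
    rw [h4] at h3
    linarith
  have hupper : 1 / (2*u) - π * x * T ≤ 2 := by
    rcases le_or_gt x (1/4) with hx4 | hx4
    · have hu4 : (1/4 : ℝ) ≤ u := by rw [hu]; linarith
      have h8 : 1 / (2*u) ≤ 2 := by
        rw [div_le_iff₀ (by linarith)]; linarith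
      have hge : 0 ≤ π * x * T := by positivity
      linarith
    · have hu4 : u < 1/4 := by rw [hu]; linarith
      have hπlt : π * u < 1 := by nlinarith [Real.pi_le_four, pi_pos]
      have hsq : (π*u)^2 < 1 := by nlinarith
      have hstep : Real.cos (π*u) / (π*u) ≤ T := by
        rw [hT, hTinv]
        exact div_le_div_of_nonneg_left hcosnn hsinpos hsin
      have hstep2 : (1 - (π*u)^2/2) / (π*u) ≤ T :=
        le_trans ((div_le_div_iff_of_pos_right hπu).2 hcos) hstep
      have h6 : π * x * ((1 - (π*u)^2/2) / (π*u)) ≤ π * x * T :=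
        mul_le_mul_of_nonneg_left hstep2 (by positivity)
      have h7 : π * x * ((1 - (π*u)^2/2) / (π*u)) = x/u - x * π^2 * u / 2 := by
        field_simp
      have hπsq : π^2 ≤ 16 := by nlinarith [Real.pi_le_four, pi_pos]
      rw [h7] at h6
      have hb : x * π^2 ≤ 8 := by
        nlinarith [mul_nonneg (by linarith : (0:ℝ) ≤ 1/2 - x) (sq_nonneg π)]
      have hprod : x * π^2 * u ≤ 2 := by
        nlinarith [mul_nonneg (by linarith : (0:ℝ) ≤ 8 - x*π^2) hu0.le]
      linarith
  rw [abs_le]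
  constructor <;> linarith


lemma measurable_tan' : Measurable Real.tan := by
  have h : Real.tan = fun x => Real.sin x / Real.cos x :=
    funext fun x => Real.tan_eq_sin_div_cos x
  rw [h]
  exact Real.continuous_sin.measurable.div Real.continuous_cos.measurable

lemma phi_integrable :
    IntervalIntegrable (fun x => 1 / (1 - 2 * x) - π * x * Real.tan (π * x))
      volume (0:ℝ) (1/2) := by
  rw [intervalIntegrable_iff_integrableOn_Ioc_of_le (by norm_num)]
  have hmeas : AEStronglyMeasurable
      (fun x : ℝ => 1 / (1 - 2 * x) - π * x * Real.tan (π * x))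
      (volume.restrict (Set.Ioc (0:ℝ) (1/2))) := by
    apply Measurable.aestronglyMeasurable
    exact (measurable_const.div ((measurable_const.sub
        (measurable_id.const_mul 2)))).sub
      (((measurable_id.const_mul π)).mul
        (measurable_tan'.comp (measurable_id.const_mul π)))
  refine Integrable.mono' (g := fun _ => (2:ℝ))
    (integrableOn_const measure_Ioc_lt_top.ne) hmeas ?_
  refine (ae_restrict_iff' measurableSet_Ioc).2 (ae_of_all _ fun x hx => ?_)
  rw [Real.norm_eq_abs]
  exact phi_abs_le x ⟨hx.1.le, hx.2⟩


lemma neglog_integrable :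
    IntegrableOn (fun x : ℝ => -Real.log (1 - 2*x)) (Set.Ioc (0:ℝ) (1/2)) volume := by
  have hc2 : Continuous (fun x : ℝ => 1 - 2*x) :=
    continuous_const.sub (continuous_const.mul continuous_id)
  have hcont : ContinuousOn
      (fun x : ℝ => ((1-2*x) * Real.log (1-2*x) - (1-2*x))/2) (Set.Icc 0 (1/2)) := by
    apply Continuous.continuousOn
    exact ((Real.continuous_mul_log.comp hc2).sub hc2).div_const 2
  have hderiv : ∀ x ∈ Set.Ioo (0:ℝ) (1/2),
      HasDerivAt (fun x : ℝ => ((1-2*x) * Real.log (1-2*x) - (1-2*x))/2)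
        (-Real.log (1 - 2*x)) x := by
    intro x hx
    have ht : (0:ℝ) < 1 - 2*x := by linarith [hx.2]
    have hinner : HasDerivAt (fun x : ℝ => 1 - 2*x) (-2) x := by
      simpa using ((hasDerivAt_id x).const_mul (2:ℝ)).const_sub 1
    have h1 : HasDerivAt (fun t : ℝ => t * Real.log t - t) (Real.log (1-2*x))
        (1 - 2*x) := by
      exact ((Real.hasDerivAt_mul_log (ne_of_gt ht)).sub (hasDerivAt_id' (1-2*x))).congr_deriv (by ring)
    have := (h1.comp x hinner).div_const 2
    refine this.congr_deriv ?_
    ring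
  exact integrableOn_deriv_of_nonneg hcont hderiv
    (fun x hx => by
      have : Real.log (1 - 2*x) < 0 :=
        Real.log_neg (by linarith [hx.2]) (by linarith [hx.1])
      linarith)

lemma cos_lb (x : ℝ) (hx0 : 0 ≤ x) (hx2 : x ≤ 1/2) :
    1 - 2*x ≤ Real.cos (π * x) := by
  have hcos_eq : Real.cos (π * x) = Real.sin (π * (1/2 - x)) := by
    rw [← Real.sin_pi_div_two_sub]
    ring_nf
  rw [hcos_eq]
  have := Real.mul_le_sin (x := π * (1/2 - x))
    (by nlinarith [pi_pos]) (by nlinarith [pi_pos])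
  calc 1 - 2*x = 2/π * (π * (1/2 - x)) := by field_simp
    _ ≤ _ := this

lemma logcos_integrable :
    IntervalIntegrable (fun x => Real.log (Real.cos (π * x))) volume (0:ℝ) (1/2) := by
  rw [intervalIntegrable_iff_integrableOn_Ioc_of_le (by norm_num)]
  have hmeas : AEStronglyMeasurable (fun x : ℝ => Real.log (Real.cos (π * x)))
      (volume.restrict (Set.Ioc (0:ℝ) (1/2))) :=
    (Real.measurable_log.comp
      (Real.continuous_cos.measurable.comp (measurable_id.const_mul π))).aestronglyMeasurable
  refine Integrable.mono' neglog_integrable hmeas ?_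
  refine (ae_restrict_iff' measurableSet_Ioc).2 (ae_of_all _ fun x hx => ?_)
  obtain ⟨hx0, hx2⟩ := hx
  rcases eq_or_lt_of_le hx2 with h | h
  · subst h
    have h1 : π * (1/2 : ℝ) = π/2 := by ring
    rw [Real.norm_eq_abs, h1, Real.cos_pi_div_two]
    norm_num
  · have hlb := cos_lb x hx0.le hx2
    have hpos : 0 < 1 - 2*x := by linarith
    have hcpos : 0 < Real.cos (π * x) := lt_of_lt_of_le hpos hlb
    have hle : Real.log (Real.cos (π * x)) ≤ 0 :=
      Real.log_nonpos hcpos.le (Real.cos_le_one _)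
    have hge : Real.log (1 - 2*x) ≤ Real.log (Real.cos (π * x)) :=
      Real.log_le_log hpos hlb
    rw [Real.norm_eq_abs, abs_of_nonpos hle]
    linarith


lemma F2_hasDeriv (x : ℝ) (hx0 : 0 ≤ x) (hx2 : x < 1/2) :
    HasDerivAt (fun x : ℝ => x * Real.log (Real.cos (π * x)) - Real.log (1 - 2*x)/2)
      (1 / (1 - 2 * x) - π * x * Real.tan (π * x) + Real.log (Real.cos (π * x))) x := by
  have ht : (0:ℝ) < 1 - 2*x := by linarith
  have hcpos : 0 < Real.cos (π * x) := lt_of_lt_of_le ht (cos_lb x hx0 hx2.le)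
  have h2 : HasDerivAt (fun x : ℝ => π * x) π x := by
    simpa using (hasDerivAt_id x).const_mul π
  have hcosd : HasDerivAt (fun x : ℝ => Real.cos (π * x)) (-Real.sin (π*x) * π) x :=
    (Real.hasDerivAt_cos (π*x)).comp x h2
  have hlogd : HasDerivAt (fun x : ℝ => Real.log (Real.cos (π * x)))
      ((Real.cos (π*x))⁻¹ * (-Real.sin (π*x) * π)) x :=
    (hcosd.log hcpos.ne').congr_deriv (by ring)
  have hprod := (hasDerivAt_id x).mul hlogd
  have hinner : HasDerivAt (fun x : ℝ => 1 - 2*x) (-2) x := by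
    simpa using ((hasDerivAt_id x).const_mul (2:ℝ)).const_sub 1
  have hlin : HasDerivAt (fun x : ℝ => Real.log (1 - 2*x)) ((1-2*x)⁻¹ * (-2)) x :=
    (hinner.log ht.ne').congr_deriv (by ring)
  have htot := hprod.sub (hlin.div_const 2)
  refine htot.congr_deriv ?_
  rw [Real.tan_eq_sin_div_cos]
  field_simp
  simp only [id_eq]
  ring

lemma integral_eq_partial (b : ℝ) (hb : b ∈ Set.Ioo (0:ℝ) (1/2)) :
    ∫ x in (0:ℝ)..b, (1/(1-2*x) - π*x*Real.tan (π*x)) =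
      (b * Real.log (Real.cos (π*b)) - Real.log (1-2*b)/2)
        - ∫ x in (0:ℝ)..b, Real.log (Real.cos (π*x)) := by
  obtain ⟨hb0, hb2⟩ := hb
  have hsub : Set.uIcc 0 b ⊆ Set.uIcc (0:ℝ) (1/2) :=
    Set.uIcc_subset_uIcc (by simp) (by
      rw [Set.mem_uIcc]; left; constructor <;> linarith)
  have hInt1 := phi_integrable.mono_set hsub
  have hInt2 := logcos_integrable.mono_set hsub
  have key := intervalIntegral.integral_eq_sub_of_hasDerivAt
    (f := fun x : ℝ => x * Real.log (Real.cos (π * x)) - Real.log (1 - 2*x)/2)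
    (f' := fun x : ℝ => 1/(1-2*x) - π*x*Real.tan (π*x) + Real.log (Real.cos (π*x)))
    (a := 0) (b := b)
    (fun x hx => by
      rw [Set.uIcc_of_le hb0.le] at hx
      exact F2_hasDeriv x hx.1 (lt_of_le_of_lt hx.2 hb2))
    (hInt1.add hInt2)
  rw [intervalIntegral.integral_add hInt1 hInt2] at key
  have h0 : (0:ℝ) * Real.log (Real.cos (π * 0)) - Real.log (1 - 2*0)/2 = 0 := by
    norm_num
  rw [h0] at key
  linarith


notation "L" => nhdsWithin (1/2 : ℝ) (Set.Ioo (0:ℝ) (1/2))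

lemma L_neBot : (L).NeBot := by
  apply mem_closure_iff_nhdsWithin_neBot.1
  rw [closure_Ioo (by norm_num : (0:ℝ) ≠ 1/2)]
  constructor <;> norm_num

lemma tendsto_prim_phi :
    Tendsto (fun b => ∫ x in (0:ℝ)..b, (1/(1-2*x) - π*x*Real.tan (π*x))) L
      (𝓝 (∫ x in (0:ℝ)..(1/2), (1/(1-2*x) - π*x*Real.tan (π*x)))) := by
  have hc := intervalIntegral.continuousOn_primitive_interval' phi_integrable
    (Set.left_mem_uIcc (a := (0:ℝ)) (b := 1/2))
  have h12 : (1/2 : ℝ) ∈ Set.uIcc (0:ℝ) (1/2) := Set.right_mem_uIcc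
  have := (hc (1/2) h12).tendsto
  refine this.mono_left (nhdsWithin_mono _ ?_)
  intro x hx
  rw [Set.uIcc_of_le (by norm_num : (0:ℝ) ≤ 1/2)]
  exact ⟨hx.1.le, hx.2.le⟩

lemma tendsto_prim_logcos :
    Tendsto (fun b => ∫ x in (0:ℝ)..b, Real.log (Real.cos (π*x))) L
      (𝓝 (∫ x in (0:ℝ)..(1/2), Real.log (Real.cos (π*x)))) := by
  have hc := intervalIntegral.continuousOn_primitive_interval' logcos_integrable
    (Set.left_mem_uIcc (a := (0:ℝ)) (b := 1/2))
  have h12 : (1/2 : ℝ) ∈ Set.uIcc (0:ℝ) (1/2) := Set.right_mem_uIcc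
  have := (hc (1/2) h12).tendsto
  refine this.mono_left (nhdsWithin_mono _ ?_)
  intro x hx
  rw [Set.uIcc_of_le (by norm_num : (0:ℝ) ≤ 1/2)]
  exact ⟨hx.1.le, hx.2.le⟩

lemma tendsto_u : Tendsto (fun b : ℝ => π * (1/2 - b)) L (𝓝[≠] 0) := by
  rw [tendsto_nhdsWithin_iff]
  constructor
  · have : Tendsto (fun b : ℝ => π * (1/2 - b)) (𝓝 (1/2)) (𝓝 (π * (1/2 - 1/2))) :=
      (tendsto_const_nhds.sub tendsto_id).const_mul π |>.mono_left le_rfl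
    simpa using this.mono_left nhdsWithin_le_nhds
  · filter_upwards [self_mem_nhdsWithin] with b hb
    have : (0:ℝ) < 1/2 - b := by linarith [hb.2]
    simp only [Set.mem_compl_iff, Set.mem_singleton_iff]
    positivity

lemma tendsto_sinc : Tendsto (fun y : ℝ => Real.sin y / y) (𝓝[≠] 0) (𝓝 1) := by
  have h := (Real.hasDerivAt_sin 0)
  rw [hasDerivAt_iff_tendsto_slope] at h
  simp only [Real.cos_zero] at h
  refine h.congr' ?_
  filter_upwards [self_mem_nhdsWithin] with y hy
  simp [slope_def_field]

lemma tendsto_ratio :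
    Tendsto (fun b : ℝ => Real.cos (π*b) / (1 - 2*b)) L (𝓝 (π/2)) := by
  have h1 : Tendsto (fun b : ℝ => Real.sin (π*(1/2-b)) / (π*(1/2-b))) L (𝓝 1) :=
    tendsto_sinc.comp tendsto_u
  have h2 := h1.const_mul (π/2)
  rw [mul_one] at h2
  refine h2.congr' ?_
  filter_upwards [self_mem_nhdsWithin] with b hb
  have hb2 : (0:ℝ) < 1/2 - b := by linarith [hb.2]
  have hcos_eq : Real.cos (π * b) = Real.sin (π * (1/2 - b)) := by
    rw [← Real.sin_pi_div_two_sub]; ring_nf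
  rw [hcos_eq]
  have hne : (1:ℝ) - 2*b ≠ 0 := by linarith
  have hne2 : π * (1/2 - b) ≠ 0 := by positivity
  rw [mul_div_assoc', div_eq_div_iff hne2 hne]
  ring

lemma tendsto_small :
    Tendsto (fun b : ℝ => (b - 1/2) * Real.log (Real.cos (π*b))) L (𝓝 0) := by
  have hlogratio : Tendsto (fun b : ℝ => Real.log (Real.cos (π*b) / (1 - 2*b))) L
      (𝓝 (Real.log (π/2))) :=
    ((Real.continuousAt_log (by positivity)).tendsto.comp tendsto_ratio)
  have hterm1 : Tendsto (fun b : ℝ => (b - 1/2) * Real.log (Real.cos (π*b) / (1 - 2*b)))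
      L (𝓝 0) := by
    have hb12 : Tendsto (fun b : ℝ => b - 1/2) L (𝓝 0) := by
      have : Tendsto (fun b : ℝ => b - 1/2) (𝓝 (1/2 : ℝ)) (𝓝 (1/2 - 1/2 : ℝ)) :=
        tendsto_id.sub tendsto_const_nhds
      simpa using this.mono_left nhdsWithin_le_nhds
    simpa using hb12.mul hlogratio
  have hterm2 : Tendsto (fun b : ℝ => (b - 1/2) * Real.log (1 - 2*b)) L (𝓝 0) := by
    have hin : Tendsto (fun b : ℝ => 1 - 2*b) L (𝓝 0) := by
      have : Tendsto (fun b : ℝ => 1 - 2*b) (𝓝 (1/2 : ℝ)) (𝓝 (1 - 2*(1/2) : ℝ)) :=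
        tendsto_const_nhds.sub (tendsto_id.const_mul 2)
      simpa using this.mono_left nhdsWithin_le_nhds
    have hml : Tendsto (fun y : ℝ => y * Real.log y) (𝓝 0) (𝓝 0) := by
      have := Real.continuous_mul_log.tendsto 0
      simpa using this
    have := (hml.comp hin).const_mul (-(1/2) : ℝ)
    rw [mul_zero] at this
    refine this.congr' ?_
    filter_upwards with b
    simp only [Function.comp]
    ring
  have := hterm1.add hterm2
  rw [add_zero] at this
  refine this.congr' ?_
  filter_upwards [self_mem_nhdsWithin] with b hb
  have hb2 : (0:ℝ) < 1 - 2*b := by linarith [hb.2]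
  have hcpos : 0 < Real.cos (π*b) := lt_of_lt_of_le hb2 (cos_lb b hb.1.le (by linarith [hb.2]))
  rw [Real.log_div hcpos.ne' hb2.ne']
  ring

lemma tendsto_F2 :
    Tendsto (fun b : ℝ => b * Real.log (Real.cos (π*b)) - Real.log (1-2*b)/2) L
      (𝓝 (Real.log (Real.sqrt π) - Real.log (Real.sqrt 2))) := by
  have hlogratio : Tendsto (fun b : ℝ => Real.log (Real.cos (π*b) / (1 - 2*b))) L
      (𝓝 (Real.log (π/2))) :=
    ((Real.continuousAt_log (by positivity)).tendsto.comp tendsto_ratio)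
  have h := (hlogratio.const_mul (1/2 : ℝ)).add tendsto_small
  rw [add_zero] at h
  have hval : 1/2 * Real.log (π/2) = Real.log (Real.sqrt π) - Real.log (Real.sqrt 2) := by
    rw [Real.log_sqrt pi_pos.le, Real.log_sqrt (by norm_num : (0:ℝ) ≤ 2),
      Real.log_div pi_ne_zero (by norm_num)]
    ring
  rw [hval] at h
  refine h.congr' ?_
  filter_upwards [self_mem_nhdsWithin] with b hb
  have hb2 : (0:ℝ) < 1 - 2*b := by linarith [hb.2]
  have hcpos : 0 < Real.cos (π*b) := lt_of_lt_of_le hb2 (cos_lb b hb.1.le (by linarith [hb.2]))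
  rw [Real.log_div hcpos.ne' hb2.ne']
  ring

/-- `∫₀^{1/2} (1/(1 − 2x) − πx tan(πx)) dx
      = log √π − log √2 − ∫₀^{1/2} log cos(πx) dx`. -/
theorem integral_tan_eq :
    ∫ x in (0 : ℝ)..(1 / 2), (1 / (1 - 2 * x) - π * x * Real.tan (π * x)) =
      Real.log (Real.sqrt π) - Real.log (Real.sqrt 2) -
        ∫ x in (0 : ℝ)..(1 / 2), Real.log (Real.cos (π * x)) := by
  have := L_neBot
  have htend2 : Tendsto (fun b : ℝ => (b * Real.log (Real.cos (π*b)) - Real.log (1-2*b)/2)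
      - ∫ x in (0:ℝ)..b, Real.log (Real.cos (π*x))) L
      (𝓝 ((Real.log (Real.sqrt π) - Real.log (Real.sqrt 2))
        - ∫ x in (0:ℝ)..(1/2), Real.log (Real.cos (π*x)))) :=
    tendsto_F2.sub tendsto_prim_logcos
  have htend1 := tendsto_prim_phi
  have heq : (fun b => ∫ x in (0:ℝ)..b, (1/(1-2*x) - π*x*Real.tan (π*x)))
      =ᶠ[L] (fun b => (b * Real.log (Real.cos (π*b)) - Real.log (1-2*b)/2)
      - ∫ x in (0:ℝ)..b, Real.log (Real.cos (π*x))) := by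
    filter_upwards [self_mem_nhdsWithin] with b hb
    exact integral_eq_partial b hb
  exact tendsto_nhds_unique htend1 (htend2.congr' heq.symm)
end
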